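/- Let A, B, C, D be jointly distributed random variables on a finite probability space. If I(A:B|C) = 0 and I(B:D|C) = 0, then I(C:D) ≤ I(C:D|A) + I(C:D|B) + I(A:B). -/

import Mathlib

open scoped BigOperators Classical

noncomputable section

/-- `p` is a probability mass function on the finite type `Ω`. -/
def IsPMF {Ω : Type*} [Fintype Ω] (p : Ω → ℝ) : Prop :=
  (∀ ω, 0 ≤ p ω) ∧ ∑ ω, p ω = 1

/-- Probability of the event `X = s` under `p`. -/
def prOf {Ω S : Type*} [Fintype Ω] [DecidableEq S] (p : Ω → ℝ) (X : Ω → S) (s : S) : ℝ :=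
  ∑ ω ∈ Finset.univ.filter (fun ω => X ω = s), p ω

/-- Shannon entropy (in bits) of the random variable `X` under the pmf `p`. -/
def ent {Ω S : Type*} [Fintype Ω] [Fintype S] [DecidableEq S] (p : Ω → ℝ) (X : Ω → S) : ℝ :=
  - ∑ s : S, prOf p X s * Real.logb 2 (prOf p X s)

/-- Mutual information `I(X:Y) = H(X) + H(Y) - H(X,Y)`. -/
def mi {Ω S T : Type*} [Fintype Ω] [Fintype S] [Fintype T] [DecidableEq S] [DecidableEq T]
    (p : Ω → ℝ) (X : Ω → S) (Y : Ω → T) : ℝ :=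
  ent p X + ent p Y - ent p (fun ω => (X ω, Y ω))

/-- Conditional mutual information `I(X:Y|Z) = H(X,Z) + H(Y,Z) - H(X,Y,Z) - H(Z)`. -/
def cmi {Ω S T U : Type*} [Fintype Ω] [Fintype S] [Fintype T] [Fintype U]
    [DecidableEq S] [DecidableEq T] [DecidableEq U]
    (p : Ω → ℝ) (X : Ω → S) (Y : Ω → T) (Z : Ω → U) : ℝ :=
  ent p (fun ω => (X ω, Z ω)) + ent p (fun ω => (Y ω, Z ω))
    - ent p (fun ω => (X ω, Y ω, Z ω)) - ent p Z

/-- Conditional entropy `H(X|Y) = H(X,Y) - H(Y)`. -/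
def condEnt {Ω S T : Type*} [Fintype Ω] [Fintype S] [Fintype T] [DecidableEq S] [DecidableEq T]
    (p : Ω → ℝ) (X : Ω → S) (Y : Ω → T) : ℝ :=
  ent p (fun ω => (X ω, Y ω)) - ent p Y

/-- The four coordinate random variables on `Bool × Bool × Bool × Bool`. -/
def vA : Bool × Bool × Bool × Bool → Bool := fun ω => ω.1
def vB : Bool × Bool × Bool × Bool → Bool := fun ω => ω.2.1
def vC : Bool × Bool × Bool × Bool → Bool := fun ω => ω.2.2.1
def vD : Bool × Bool × Bool × Bool → Bool := fun ω => ω.2.2.2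

open Finset Real

namespace MatusAux

variable {Ω S T U : Type*} [Fintype Ω]

lemma prOf_eq_sum_ite [DecidableEq S] (p : Ω → ℝ) (X : Ω → S) (s : S) :
    prOf p X s = ∑ ω, if X ω = s then p ω else 0 := by
  rw [prOf, Finset.sum_filter]

lemma prOf_nonneg [DecidableEq S] {p : Ω → ℝ} (hp0 : ∀ ω, 0 ≤ p ω) (X : Ω → S) (s : S) :
    0 ≤ prOf p X s := Finset.sum_nonneg fun ω _ => hp0 ω

lemma prOf_congr [DecidableEq S] [DecidableEq T] (p : Ω → ℝ) {X : Ω → S} {Y : Ω → T} {s : S} {t : T}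
    (h : ∀ ω, X ω = s ↔ Y ω = t) : prOf p X s = prOf p Y t := by
  rw [prOf_eq_sum_ite, prOf_eq_sum_ite]
  refine Finset.sum_congr rfl fun ω _ => ?_
  simp only [h ω]

lemma prOf_mono [DecidableEq S] [DecidableEq T] {p : Ω → ℝ} (hp0 : ∀ ω, 0 ≤ p ω)
    {X : Ω → S} {Y : Ω → T} {s : S} {t : T} (h : ∀ ω, X ω = s → Y ω = t) :
    prOf p X s ≤ prOf p Y t := by
  apply Finset.sum_le_sum_of_subset_of_nonneg
  · intro ω hω
    simp only [Finset.mem_filter, Finset.mem_univ, true_and] at hω ⊢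
    exact h ω hω
  · exact fun ω _ _ => hp0 ω

lemma prOf_eq_zero [DecidableEq S] (p : Ω → ℝ) {X : Ω → S} {s : S} (h : ∀ ω, X ω ≠ s) :
    prOf p X s = 0 := by
  rw [prOf_eq_sum_ite]
  exact Finset.sum_eq_zero fun ω _ => by simp [h ω]

lemma self_le_prOf [DecidableEq S] {p : Ω → ℝ} (hp0 : ∀ ω, 0 ≤ p ω) (X : Ω → S) (ω : Ω) :
    p ω ≤ prOf p X (X ω) := by
  apply Finset.single_le_sum (fun i _ => hp0 i)
  simp

lemma sum_prOf [DecidableEq S] [Fintype S] (p : Ω → ℝ) (X : Ω → S) :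
    ∑ s, prOf p X s = ∑ ω, p ω := by
  simp only [prOf_eq_sum_ite]
  rw [Finset.sum_comm]
  refine Finset.sum_congr rfl fun ω _ => ?_
  simp

lemma marg_fst [DecidableEq S] [DecidableEq T] [Fintype S] (p : Ω → ℝ) (X : Ω → S) (Y : Ω → T) (t : T) :
    ∑ s, prOf p (fun ω => (X ω, Y ω)) (s, t) = prOf p Y t := by
  simp only [prOf_eq_sum_ite]
  rw [Finset.sum_comm]
  refine Finset.sum_congr rfl fun ω _ => ?_
  simp [Prod.ext_iff, ite_and]

lemma marg_snd [DecidableEq S] [DecidableEq T] [Fintype T] (p : Ω → ℝ) (X : Ω → S) (Y : Ω → T) (s : S) :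
    ∑ t, prOf p (fun ω => (X ω, Y ω)) (s, t) = prOf p X s := by
  simp only [prOf_eq_sum_ite]
  rw [Finset.sum_comm]
  refine Finset.sum_congr rfl fun ω _ => ?_
  simp [Prod.ext_iff, ite_and]

lemma prOf_comp [DecidableEq S] [DecidableEq T] [Fintype S] (p : Ω → ℝ) (W : Ω → S) (g : S → T) (t : T) :
    prOf p (fun ω => g (W ω)) t = ∑ v, if g v = t then prOf p W v else 0 := by
  simp only [prOf_eq_sum_ite]
  have h1 : ∀ v : S, (if g v = t then ∑ ω, if W ω = v then p ω else 0 else 0)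
      = ∑ ω, if W ω = v ∧ g v = t then p ω else 0 := by
    intro v
    split_ifs with h
    · exact Finset.sum_congr rfl fun ω _ => by simp [h]
    · exact (Finset.sum_eq_zero fun ω _ => by simp [h]).symm
  rw [Finset.sum_congr rfl fun v _ => h1 v, Finset.sum_comm]
  refine Finset.sum_congr rfl fun ω _ => ?_
  simp [ite_and]

lemma ent_ext {Ω' : Type*} [Fintype Ω'] [Fintype S] [DecidableEq S] {p : Ω → ℝ} {q : Ω' → ℝ}
    {X : Ω → S} {Y : Ω' → S} (h : ∀ s, prOf p X s = prOf q Y s) : ent p X = ent q Y := by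
  unfold ent
  congr 1
  exact Finset.sum_congr rfl fun s _ => by rw [h s]

lemma ent_comp [DecidableEq S] [DecidableEq T] [Fintype S] [Fintype T] (p : Ω → ℝ) (W : Ω → S) (g : S → T) :
    ent p (fun ω => g (W ω)) = -∑ v, prOf p W v * Real.logb 2 (prOf p (fun ω => g (W ω)) (g v)) := by
  unfold ent
  congr 1
  calc ∑ t, prOf p (fun ω => g (W ω)) t * Real.logb 2 (prOf p (fun ω => g (W ω)) t)
      = ∑ t, ∑ v, (if g v = t then prOf p W v * Real.logb 2 (prOf p (fun ω => g (W ω)) t) else 0) := by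
        refine Finset.sum_congr rfl fun t _ => ?_
        rw [prOf_comp, Finset.sum_mul]
        refine Finset.sum_congr rfl fun v _ => ?_
        split_ifs <;> simp
    _ = ∑ v, ∑ t, (if g v = t then prOf p W v * Real.logb 2 (prOf p (fun ω => g (W ω)) t) else 0) :=
        Finset.sum_comm
    _ = ∑ v, prOf p W v * Real.logb 2 (prOf p (fun ω => g (W ω)) (g v)) := by
        refine Finset.sum_congr rfl fun v _ => ?_
        simp

lemma ent_relabel [DecidableEq S] [DecidableEq T] [Fintype S] [Fintype T] (p : Ω → ℝ)
    {e : S → T} (he : Function.Injective e) (X : Ω → S) :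
    ent p (fun ω => e (X ω)) = ent p X := by
  unfold ent
  congr 1
  rw [← Finset.sum_subset (Finset.subset_univ (Finset.univ.image e))]
  · rw [Finset.sum_image (fun x _ y _ h => he h)]
    refine Finset.sum_congr rfl fun s _ => ?_
    have hs : prOf p (fun ω => e (X ω)) (e s) = prOf p X s :=
      prOf_congr p (fun ω => ⟨fun h => he h, fun h => by rw [h]⟩)
    rw [hs]
  · intro t _ ht
    have : prOf p (fun ω => e (X ω)) t = 0 :=
      prOf_eq_zero p fun ω h => ht (by rw [← h]; exact Finset.mem_image_of_mem _ (Finset.mem_univ _))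
    rw [this]
    simp

end MatusAux

namespace MatusAux

variable {Ω S T U : Type*} [Fintype Ω] [Fintype S] [Fintype T] [Fintype U]
  [DecidableEq S] [DecidableEq T] [DecidableEq U]

lemma cmi_repr (p : Ω → ℝ) (X : Ω → S) (Y : Ω → T) (Z : Ω → U) :
    cmi p X Y Z = ∑ v : S × T × U,
      prOf p (fun ω => (X ω, Y ω, Z ω)) v *
        (Real.logb 2 (prOf p (fun ω => (X ω, Y ω, Z ω)) v)
         + Real.logb 2 (prOf p Z v.2.2)
         - Real.logb 2 (prOf p (fun ω => (X ω, Z ω)) (v.1, v.2.2))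
         - Real.logb 2 (prOf p (fun ω => (Y ω, Z ω)) v.2)) := by
  have h13 : ent p (fun ω => (X ω, Z ω)) = -∑ v : S × T × U,
      prOf p (fun ω => (X ω, Y ω, Z ω)) v *
        Real.logb 2 (prOf p (fun ω => (X ω, Z ω)) (v.1, v.2.2)) :=
    ent_comp p (fun ω => (X ω, Y ω, Z ω)) (fun v => (v.1, v.2.2))
  have h23 : ent p (fun ω => (Y ω, Z ω)) = -∑ v : S × T × U,
      prOf p (fun ω => (X ω, Y ω, Z ω)) v *
        Real.logb 2 (prOf p (fun ω => (Y ω, Z ω)) v.2) :=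
    ent_comp p (fun ω => (X ω, Y ω, Z ω)) (fun v => v.2)
  have h3 : ent p Z = -∑ v : S × T × U,
      prOf p (fun ω => (X ω, Y ω, Z ω)) v *
        Real.logb 2 (prOf p Z v.2.2) :=
    ent_comp p (fun ω => (X ω, Y ω, Z ω)) (fun v => v.2.2)
  rw [cmi, h13, h23, h3, ent]
  simp only [mul_add, mul_sub, Finset.sum_add_distrib, Finset.sum_sub_distrib]
  ring

/-- Sum of the "independent coupling" masses equals 1. -/
lemma sum_coupling {p : Ω → ℝ} (hp : IsPMF p) (X : Ω → S) (Y : Ω → T) (Z : Ω → U) :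
    ∑ v : S × T × U,
      prOf p (fun ω => (X ω, Z ω)) (v.1, v.2.2) * prOf p (fun ω => (Y ω, Z ω)) v.2
        / prOf p Z v.2.2 = 1 := by
  have hz : ∀ z : U, ∑ x : S, ∑ y : T,
      prOf p (fun ω => (X ω, Z ω)) (x, z) * prOf p (fun ω => (Y ω, Z ω)) (y, z)
        / prOf p Z z = prOf p Z z := by
    intro z
    have : ∑ x : S, ∑ y : T,
        prOf p (fun ω => (X ω, Z ω)) (x, z) * prOf p (fun ω => (Y ω, Z ω)) (y, z)
          / prOf p Z z
        = (∑ x : S, prOf p (fun ω => (X ω, Z ω)) (x, z)) *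
          (∑ y : T, prOf p (fun ω => (Y ω, Z ω)) (y, z)) / prOf p Z z := by
      rw [Finset.sum_mul, Finset.sum_div]
      refine Finset.sum_congr rfl fun x _ => ?_
      rw [Finset.mul_sum, Finset.sum_div]
    rw [this, marg_fst, marg_fst]
    rcases eq_or_ne (prOf p Z z) 0 with h0 | h0
    · rw [h0]; simp
    · field_simp
  calc ∑ v : S × T × U,
      prOf p (fun ω => (X ω, Z ω)) (v.1, v.2.2) * prOf p (fun ω => (Y ω, Z ω)) v.2
        / prOf p Z v.2.2
      = ∑ x : S, ∑ y : T, ∑ z : U,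
        prOf p (fun ω => (X ω, Z ω)) (x, z) * prOf p (fun ω => (Y ω, Z ω)) (y, z)
          / prOf p Z z := by
        rw [Fintype.sum_prod_type]
        exact Finset.sum_congr rfl fun x _ => by rw [Fintype.sum_prod_type]
    _ = ∑ z : U, ∑ x : S, ∑ y : T,
        prOf p (fun ω => (X ω, Z ω)) (x, z) * prOf p (fun ω => (Y ω, Z ω)) (y, z)
          / prOf p Z z := by
        rw [show (∑ x : S, ∑ y : T, ∑ z : U,
            prOf p (fun ω => (X ω, Z ω)) (x, z) * prOf p (fun ω => (Y ω, Z ω)) (y, z)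
              / prOf p Z z) = ∑ x : S, ∑ z : U, ∑ y : T,
            prOf p (fun ω => (X ω, Z ω)) (x, z) * prOf p (fun ω => (Y ω, Z ω)) (y, z)
              / prOf p Z z from Finset.sum_congr rfl fun x _ => Finset.sum_comm]
        exact Finset.sum_comm
    _ = ∑ z : U, prOf p Z z := Finset.sum_congr rfl fun z _ => hz z
    _ = 1 := by rw [sum_prOf, hp.2]

/-- Pointwise bound used for nonnegativity of cmi. -/
lemma cmi_term_bound {p : Ω → ℝ} (hp : IsPMF p) (X : Ω → S) (Y : Ω → T) (Z : Ω → U)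
    (v : S × T × U) :
    -(Real.log 2) * (prOf p (fun ω => (X ω, Y ω, Z ω)) v *
        (Real.logb 2 (prOf p (fun ω => (X ω, Y ω, Z ω)) v)
         + Real.logb 2 (prOf p Z v.2.2)
         - Real.logb 2 (prOf p (fun ω => (X ω, Z ω)) (v.1, v.2.2))
         - Real.logb 2 (prOf p (fun ω => (Y ω, Z ω)) v.2)))
      ≤ prOf p (fun ω => (X ω, Z ω)) (v.1, v.2.2) * prOf p (fun ω => (Y ω, Z ω)) v.2
          / prOf p Z v.2.2
        - prOf p (fun ω => (X ω, Y ω, Z ω)) v := by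
  obtain ⟨x, y, z⟩ := v
  set a := prOf p (fun ω => (X ω, Y ω, Z ω)) (x, y, z) with ha
  set a13 := prOf p (fun ω => (X ω, Z ω)) (x, z) with ha13
  set a23 := prOf p (fun ω => (Y ω, Z ω)) (y, z) with ha23
  set c3 := prOf p Z z with hc3
  have hL : Real.log 2 ≠ 0 := by
    have := Real.log_pos (by norm_num : (1:ℝ) < 2); linarith
  rcases eq_or_lt_of_le (prOf_nonneg hp.1 (fun ω => (X ω, Y ω, Z ω)) (x, y, z)) with h0 | hpos
  · have ha0 : a = 0 := h0.symm
    rw [ha0]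
    simp only [zero_mul, mul_zero, neg_zero, sub_zero]
    exact div_nonneg (mul_nonneg (prOf_nonneg hp.1 _ _) (prOf_nonneg hp.1 _ _))
      (prOf_nonneg hp.1 _ _)
  · have h13 : a ≤ a13 := prOf_mono hp.1 (fun ω h => by
      simp only [Prod.mk.injEq] at h ⊢; tauto)
    have h23 : a ≤ a23 := prOf_mono hp.1 (fun ω h => by
      simp only [Prod.mk.injEq] at h ⊢; tauto)
    have h3 : a ≤ c3 := prOf_mono hp.1 (fun ω h => by
      simp only [Prod.mk.injEq] at h; tauto)
    have hpa : 0 < a := hpos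
    have hp13 : 0 < a13 := lt_of_lt_of_le hpa h13
    have hp23 : 0 < a23 := lt_of_lt_of_le hpa h23
    have hp3 : 0 < c3 := lt_of_lt_of_le hpa h3
    have expand : -(Real.log 2) * (a * (Real.logb 2 a + Real.logb 2 c3
        - Real.logb 2 a13 - Real.logb 2 a23))
        = a * Real.log (a13 * a23 / (a * c3)) := by
      rw [Real.log_div (by positivity) (by positivity),
        Real.log_mul (ne_of_gt hp13) (ne_of_gt hp23),
        Real.log_mul (ne_of_gt hpa) (ne_of_gt hp3)]
      simp only [Real.logb]
      field_simp
      ring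
    rw [expand]
    have hlog : Real.log (a13 * a23 / (a * c3)) ≤ a13 * a23 / (a * c3) - 1 :=
      Real.log_le_sub_one_of_pos (by positivity)
    have := mul_le_mul_of_nonneg_left hlog (le_of_lt hpa)
    refine le_trans this (le_of_eq ?_)
    field_simp

lemma cmi_nonneg {p : Ω → ℝ} (hp : IsPMF p) (X : Ω → S) (Y : Ω → T) (Z : Ω → U) :
    0 ≤ cmi p X Y Z := by
  have hsum : ∑ v : S × T × U,
      (prOf p (fun ω => (X ω, Z ω)) (v.1, v.2.2) * prOf p (fun ω => (Y ω, Z ω)) v.2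
        / prOf p Z v.2.2 - prOf p (fun ω => (X ω, Y ω, Z ω)) v) = 0 := by
    rw [Finset.sum_sub_distrib, sum_coupling hp X Y Z, sum_prOf, hp.2, sub_self]
  have hle : -(Real.log 2) * cmi p X Y Z ≤ 0 := by
    rw [cmi_repr, Finset.mul_sum]
    exact le_trans (Finset.sum_le_sum fun v _ => cmi_term_bound hp X Y Z v) (le_of_eq hsum)
  have hL : 0 < Real.log 2 := Real.log_pos (by norm_num)
  nlinarith

lemma cmi_eq_zero_fact {p : Ω → ℝ} (hp : IsPMF p) {X : Ω → S} {Y : Ω → T} {Z : Ω → U}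
    (h : cmi p X Y Z = 0) (x : S) (y : T) (z : U) :
    prOf p (fun ω => (X ω, Y ω, Z ω)) (x, y, z) * prOf p Z z
      = prOf p (fun ω => (X ω, Z ω)) (x, z) * prOf p (fun ω => (Y ω, Z ω)) (y, z) := by
  have hsum : ∑ v : S × T × U,
      (prOf p (fun ω => (X ω, Z ω)) (v.1, v.2.2) * prOf p (fun ω => (Y ω, Z ω)) v.2
        / prOf p Z v.2.2 - prOf p (fun ω => (X ω, Y ω, Z ω)) v) = 0 := by
    rw [Finset.sum_sub_distrib, sum_coupling hp X Y Z, sum_prOf, hp.2, sub_self]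
  have hzero : ∑ v : S × T × U, -(Real.log 2) * (prOf p (fun ω => (X ω, Y ω, Z ω)) v *
      (Real.logb 2 (prOf p (fun ω => (X ω, Y ω, Z ω)) v)
       + Real.logb 2 (prOf p Z v.2.2)
       - Real.logb 2 (prOf p (fun ω => (X ω, Z ω)) (v.1, v.2.2))
       - Real.logb 2 (prOf p (fun ω => (Y ω, Z ω)) v.2))) = 0 := by
    rw [← Finset.mul_sum, ← cmi_repr, h, mul_zero]
  have heq := (Finset.sum_eq_sum_iff_of_le
    (fun v _ => cmi_term_bound hp X Y Z v)).mp (by rw [hzero, hsum])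
  have hv := heq (x, y, z) (Finset.mem_univ _)
  set a := prOf p (fun ω => (X ω, Y ω, Z ω)) (x, y, z) with ha
  set a13 := prOf p (fun ω => (X ω, Z ω)) (x, z) with ha13
  set a23 := prOf p (fun ω => (Y ω, Z ω)) (y, z) with ha23
  set c3 := prOf p Z z with hc3
  rcases eq_or_lt_of_le (prOf_nonneg hp.1 (fun ω => (X ω, Y ω, Z ω)) (x, y, z)) with h0 | hpos
  · -- a = 0
    have ha0 : a = 0 := h0.symm
    have hu : a13 * a23 / c3 - a = 0 := by
      rw [← hv, ha0]; simp
    rcases eq_or_ne c3 0 with hc0 | hc0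
    · have : a13 ≤ c3 := prOf_mono hp.1 (fun ω h => by
        simp only [Prod.mk.injEq] at h; tauto)
      have h13z : a13 = 0 := le_antisymm (hc0 ▸ this) (prOf_nonneg hp.1 _ _)
      rw [ha0, h13z]; ring
    · have : a13 * a23 = 0 := by
        have := hu
        rw [ha0, sub_zero] at this
        field_simp at this
        rw [mul_zero] at this
        exact this
      rw [ha0, this]; ring
  · have h13 : a ≤ a13 := prOf_mono hp.1 (fun ω h => by
      simp only [Prod.mk.injEq] at h ⊢; tauto)
    have h23 : a ≤ a23 := prOf_mono hp.1 (fun ω h => by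
      simp only [Prod.mk.injEq] at h ⊢; tauto)
    have h3 : a ≤ c3 := prOf_mono hp.1 (fun ω h => by
      simp only [Prod.mk.injEq] at h; tauto)
    have hpa : 0 < a := hpos
    have hp13 : 0 < a13 := lt_of_lt_of_le hpa h13
    have hp23 : 0 < a23 := lt_of_lt_of_le hpa h23
    have hp3 : 0 < c3 := lt_of_lt_of_le hpa h3
    have expand : -(Real.log 2) * (a * (Real.logb 2 a + Real.logb 2 c3
        - Real.logb 2 a13 - Real.logb 2 a23))
        = a * Real.log (a13 * a23 / (a * c3)) := by
      rw [Real.log_div (by positivity) (by positivity),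
        Real.log_mul (ne_of_gt hp13) (ne_of_gt hp23),
        Real.log_mul (ne_of_gt hpa) (ne_of_gt hp3)]
      simp only [Real.logb]
      have hL : Real.log 2 ≠ 0 := by
        have := Real.log_pos (by norm_num : (1:ℝ) < 2); linarith
      field_simp
      ring
    rw [expand] at hv
    -- hv : a * log r = a13*a23/c3 - a  where r = a13*a23/(a*c3)
    set r := a13 * a23 / (a * c3) with hr
    have hrpos : 0 < r := by positivity
    have hrhs : a13 * a23 / c3 - a = a * (r - 1) := by
      rw [hr]; field_simp
    rw [hrhs] at hv
    have hlogr : Real.log r = r - 1 := by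
      have := mul_left_cancel₀ (ne_of_gt hpa) hv
      linarith [this]
    have hr1 : r = 1 := by
      by_contra hne
      have := Real.log_lt_sub_one_of_pos hrpos hne
      linarith
    have : a13 * a23 = a * c3 := by
      have h' : a13 * a23 / (a * c3) = 1 := hr ▸ hr1
      field_simp at h'
      linarith [h']
    linarith [this]

lemma cmi_eq_zero_of_fact {p : Ω → ℝ} (hp : IsPMF p) {X : Ω → S} {Y : Ω → T} {Z : Ω → U}
    (h : ∀ x y z, prOf p (fun ω => (X ω, Y ω, Z ω)) (x, y, z) * prOf p Z z
      = prOf p (fun ω => (X ω, Z ω)) (x, z) * prOf p (fun ω => (Y ω, Z ω)) (y, z)) :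
    cmi p X Y Z = 0 := by
  rw [cmi_repr]
  refine Finset.sum_eq_zero fun v _ => ?_
  obtain ⟨x, y, z⟩ := v
  rcases eq_or_lt_of_le (prOf_nonneg hp.1 (fun ω => (X ω, Y ω, Z ω)) (x, y, z)) with h0 | hpos
  · rw [← h0, zero_mul]
  · set a := prOf p (fun ω => (X ω, Y ω, Z ω)) (x, y, z) with ha
    set a13 := prOf p (fun ω => (X ω, Z ω)) (x, z) with ha13
    set a23 := prOf p (fun ω => (Y ω, Z ω)) (y, z) with ha23
    set c3 := prOf p Z z with hc3
    have h13 : a ≤ a13 := prOf_mono hp.1 (fun ω hh => by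
      simp only [Prod.mk.injEq] at hh ⊢; tauto)
    have h23 : a ≤ a23 := prOf_mono hp.1 (fun ω hh => by
      simp only [Prod.mk.injEq] at hh ⊢; tauto)
    have h3 : a ≤ c3 := prOf_mono hp.1 (fun ω hh => by
      simp only [Prod.mk.injEq] at hh; tauto)
    have hpa : 0 < a := hpos
    have hp13 : 0 < a13 := lt_of_lt_of_le hpa h13
    have hp23 : 0 < a23 := lt_of_lt_of_le hpa h23
    have hp3 : 0 < c3 := lt_of_lt_of_le hpa h3
    have hfac : a * c3 = a13 * a23 := h x y z
    have : Real.logb 2 a + Real.logb 2 c3 = Real.logb 2 a13 + Real.logb 2 a23 := by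
      rw [← Real.logb_mul (ne_of_gt hpa) (ne_of_gt hp3),
        ← Real.logb_mul (ne_of_gt hp13) (ne_of_gt hp23), hfac]
    rw [show Real.logb 2 a + Real.logb 2 c3 - Real.logb 2 a13 - Real.logb 2 a23 = 0 by
      linarith, mul_zero]

end MatusAux

namespace MatusAux

section QP
variable {Ω β γ S : Type*} [Fintype Ω] [Fintype β] [Fintype γ] [Fintype S]
  [DecidableEq β] [DecidableEq γ] [DecidableEq S]

/-- The modified distribution: resample `B` conditionally independently given `C`. -/
def qp (p : Ω → ℝ) (B : Ω → β) (C : Ω → γ) : Ω × β → ℝ :=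
  fun x => p x.1 * (prOf p (fun ω => (B ω, C ω)) (x.2, C x.1) / prOf p C (C x.1))

variable (p : Ω → ℝ) (B : Ω → β) (C : Ω → γ)

lemma qp_rowsum (hp : IsPMF p) (ω : Ω) : ∑ b, qp p B C (ω, b) = p ω := by
  simp only [qp]
  rw [← Finset.mul_sum, ← Finset.sum_div, marg_fst p B C (C ω)]
  rcases eq_or_ne (prOf p C (C ω)) 0 with h0 | h0
  · have : p ω = 0 := le_antisymm (h0 ▸ self_le_prOf hp.1 C ω) (hp.1 ω)
    rw [this, h0]
    simp
  · rw [div_self h0, mul_one]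

lemma qp_pmf (hp : IsPMF p) : IsPMF (qp p B C) := by
  constructor
  · intro x
    exact mul_nonneg (hp.1 x.1)
      (div_nonneg (prOf_nonneg hp.1 _ _) (prOf_nonneg hp.1 _ _))
  · rw [Fintype.sum_prod_type]
    rw [Finset.sum_congr rfl fun ω _ => qp_rowsum p B C hp ω]
    exact hp.2

/-- Marginals of variables depending only on the first coordinate are unchanged. -/
lemma qp_fst (hp : IsPMF p) (f : Ω → S) (s : S) :
    prOf (qp p B C) (fun x => f x.1) s = prOf p f s := by
  rw [prOf_eq_sum_ite, Fintype.sum_prod_type, prOf_eq_sum_ite]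
  refine Finset.sum_congr rfl fun ω _ => ?_
  by_cases h : f ω = s
  · simp only [h, if_true]
    exact qp_rowsum p B C hp ω
  · simp [h]

/-- Joint of `(B', (f, C))` under `qp`. -/
lemma qp_bfc (f : Ω → S) (b : β) (s : S) (c : γ) :
    prOf (qp p B C) (fun x => (x.2, (f x.1, C x.1))) (b, (s, c))
      = prOf p (fun ω => (f ω, C ω)) (s, c) *
          (prOf p (fun ω => (B ω, C ω)) (b, c) / prOf p C c) := by
  rw [prOf_eq_sum_ite, Fintype.sum_prod_type]
  have step : ∀ ω, (∑ b' : β, if ((b', (f ω, C ω)) : β × S × γ) = (b, (s, c))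
        then qp p B C (ω, b') else 0)
      = (if (f ω, C ω) = (s, c) then p ω else 0) *
          (prOf p (fun ω' => (B ω', C ω')) (b, c) / prOf p C c) := by
    intro ω
    by_cases h : (f ω, C ω) = (s, c)
    · have h1 : f ω = s := by rw [Prod.mk.injEq] at h; exact h.1
      have h2 : C ω = c := by rw [Prod.mk.injEq] at h; exact h.2
      simp only [h, if_true, Prod.mk.injEq, h1, h2, and_self, and_true]
      rw [Finset.sum_ite_eq' Finset.univ b (fun b' => qp p B C (ω, b'))]
      simp only [Finset.mem_univ, if_true, qp, h2]
    · simp only [h, if_false, Prod.mk.injEq, zero_mul]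
      refine Finset.sum_eq_zero fun b' _ => ?_
      have : ¬(b' = b ∧ (f ω, C ω) = (s, c)) := fun hc => h hc.2
      simp only [Prod.mk.injEq] at this ⊢
      rw [if_neg (by tauto)]
  rw [Finset.sum_congr rfl fun ω _ => step ω, ← Finset.sum_mul, ← prOf_eq_sum_ite]

/-- Joint of `((f, C), B')` under `qp`. -/
lemma qp_fcb (f : Ω → S) (b : β) (s : S) (c : γ) :
    prOf (qp p B C) (fun x => ((f x.1, C x.1), x.2)) ((s, c), b)
      = prOf p (fun ω => (f ω, C ω)) (s, c) *
          (prOf p (fun ω => (B ω, C ω)) (b, c) / prOf p C c) := by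
  rw [← qp_bfc p B C f b s c]
  exact prOf_congr _ fun x => by
    constructor <;> intro h <;> simp only [Prod.mk.injEq] at h ⊢ <;> tauto

/-- Joint of `(f, B')` under `qp` (no `C` in the tuple): sum over `c`. -/
lemma qp_fb (f : Ω → S) (s : S) (b : β) :
    prOf (qp p B C) (fun x => (f x.1, x.2)) (s, b)
      = ∑ c, prOf p (fun ω => (f ω, C ω)) (s, c) *
          (prOf p (fun ω => (B ω, C ω)) (b, c) / prOf p C c) := by
  have lhs : prOf (qp p B C) (fun x => (f x.1, x.2)) (s, b)
      = ∑ ω, if f ω = s then qp p B C (ω, b) else 0 := by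
    rw [prOf_eq_sum_ite, Fintype.sum_prod_type]
    refine Finset.sum_congr rfl fun ω _ => ?_
    by_cases h : f ω = s <;> simp [h, Prod.mk.injEq]
  rw [lhs]
  have rhs : ∀ c, prOf p (fun ω => (f ω, C ω)) (s, c) *
      (prOf p (fun ω => (B ω, C ω)) (b, c) / prOf p C c)
      = ∑ ω, if (f ω, C ω) = (s, c) then
          p ω * (prOf p (fun ω' => (B ω', C ω')) (b, c) / prOf p C c) else 0 := by
    intro c
    rw [prOf_eq_sum_ite, Finset.sum_mul]
    exact Finset.sum_congr rfl fun ω _ => by split_ifs <;> simp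
  rw [Finset.sum_congr rfl fun c _ => rhs c, Finset.sum_comm]
  refine Finset.sum_congr rfl fun ω _ => ?_
  by_cases h : f ω = s
  · simp only [h, if_true, Prod.mk.injEq, true_and, qp]
    rw [show (∑ c, if C ω = c then
        p ω * (prOf p (fun ω' => (B ω', C ω')) (b, c) / prOf p C c) else 0)
      = p ω * (prOf p (fun ω' => (B ω', C ω')) (b, C ω) / prOf p C (C ω)) from by
        rw [Finset.sum_ite_eq Finset.univ (C ω)]
        simp]
  · simp [h, Prod.mk.injEq]

/-- Marginal of `B'` alone under `qp`. -/
lemma qp_b (hp : IsPMF p) (b : β) :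
    prOf (qp p B C) (fun x => x.2) b = prOf p B b := by
  have lhs : prOf (qp p B C) (fun x => x.2) b = ∑ ω, qp p B C (ω, b) := by
    rw [prOf_eq_sum_ite, Fintype.sum_prod_type]
    refine Finset.sum_congr rfl fun ω _ => ?_
    simp
  rw [lhs]
  have step1 : ∀ ω, qp p B C (ω, b) = ∑ c, if C ω = c then
      p ω * (prOf p (fun ω' => (B ω', C ω')) (b, c) / prOf p C c) else 0 := by
    intro ω
    rw [Finset.sum_ite_eq Finset.univ (C ω)]
    simp [qp]
  rw [Finset.sum_congr rfl fun ω _ => step1 ω, Finset.sum_comm]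
  have step2 : ∀ c, (∑ ω, if C ω = c then
      p ω * (prOf p (fun ω' => (B ω', C ω')) (b, c) / prOf p C c) else 0)
      = prOf p (fun ω => (B ω, C ω)) (b, c) := by
    intro c
    rw [show (∑ ω, if C ω = c then
        p ω * (prOf p (fun ω' => (B ω', C ω')) (b, c) / prOf p C c) else 0)
      = (∑ ω, if C ω = c then p ω else 0) *
          (prOf p (fun ω' => (B ω', C ω')) (b, c) / prOf p C c) from by
        rw [Finset.sum_mul]
        exact Finset.sum_congr rfl fun ω _ => by split_ifs <;> simp]
    rw [← prOf_eq_sum_ite]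
    rcases eq_or_ne (prOf p C c) 0 with h0 | h0
    · have hb : prOf p (fun ω => (B ω, C ω)) (b, c) = 0 :=
        le_antisymm (h0 ▸ prOf_mono hp.1 (fun ω hh => by
          simp only [Prod.mk.injEq] at hh; tauto)) (prOf_nonneg hp.1 _ _)
      rw [h0, hb]
      simp
    · field_simp
  rw [Finset.sum_congr rfl fun c _ => step2 c]
  exact marg_snd p B C b

end QP
end MatusAux

namespace MatusAux

lemma chain {Ω' α' β' γ' δ' : Type*} [Fintype Ω'] [Fintype α'] [Fintype β'] [Fintype γ']
    [Fintype δ'] [DecidableEq α'] [DecidableEq β'] [DecidableEq γ'] [DecidableEq δ']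
    {q : Ω' → ℝ} (hq : IsPMF q) (A : Ω' → α') (B : Ω' → β') (C : Ω' → γ') (D : Ω' → δ')
    (hz1 : cmi q B D C = 0)
    (hz2 : cmi q B D (fun ω => (A ω, C ω)) = 0) :
    mi q C D ≤ cmi q C D A + cmi q C D B + mi q A B := by
  have n1 : 0 ≤ cmi q A B D := cmi_nonneg hq A B D
  have n2 : 0 ≤ cmi q C D (fun ω => (A ω, B ω)) := cmi_nonneg hq C D _
  have r1 : ent q (fun ω => (D ω, C ω)) = ent q (fun ω => (C ω, D ω)) :=
    ent_relabel q (e := fun v : γ' × δ' => (v.2, v.1))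
      (fun a b h => by simp only [Prod.ext_iff] at h ⊢; tauto) (fun ω => (C ω, D ω))
  have r2 : ent q (fun ω => (B ω, C ω)) = ent q (fun ω => (C ω, B ω)) :=
    ent_relabel q (e := fun v : γ' × β' => (v.2, v.1))
      (fun a b h => by simp only [Prod.ext_iff] at h ⊢; tauto) (fun ω => (C ω, B ω))
  have r3 : ent q (fun ω => (B ω, D ω)) = ent q (fun ω => (D ω, B ω)) :=
    ent_relabel q (e := fun v : δ' × β' => (v.2, v.1))
      (fun a b h => by simp only [Prod.ext_iff] at h ⊢; tauto) (fun ω => (D ω, B ω))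
  have r4 : ent q (fun ω => (B ω, D ω, C ω)) = ent q (fun ω => (C ω, D ω, B ω)) :=
    ent_relabel q (e := fun v : γ' × δ' × β' => (v.2.2, (v.2.1, v.1)))
      (fun a b h => by simp only [Prod.ext_iff] at h ⊢; tauto) (fun ω => (C ω, D ω, B ω))
  have r5 : ent q (fun ω => (B ω, A ω)) = ent q (fun ω => (A ω, B ω)) :=
    ent_relabel q (e := fun v : α' × β' => (v.2, v.1))
      (fun a b h => by simp only [Prod.ext_iff] at h ⊢; tauto) (fun ω => (A ω, B ω))
  have r6 : ent q (fun ω => (A ω, D ω)) = ent q (fun ω => (D ω, A ω)) :=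
    ent_relabel q (e := fun v : δ' × α' => (v.2, v.1))
      (fun a b h => by simp only [Prod.ext_iff] at h ⊢; tauto) (fun ω => (D ω, A ω))
  have r7 : ent q (fun ω => (A ω, B ω, D ω)) = ent q (fun ω => (B ω, D ω, A ω)) :=
    ent_relabel q (e := fun v : β' × δ' × α' => (v.2.2, (v.1, v.2.1)))
      (fun a b h => by simp only [Prod.ext_iff] at h ⊢; tauto) (fun ω => (B ω, D ω, A ω))
  have r8 : ent q (fun ω => (C ω, A ω)) = ent q (fun ω => (A ω, C ω)) :=
    ent_relabel q (e := fun v : α' × γ' => (v.2, v.1))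
      (fun a b h => by simp only [Prod.ext_iff] at h ⊢; tauto) (fun ω => (A ω, C ω))
  have r9 : ent q (fun ω => (C ω, D ω, A ω)) = ent q (fun ω => (D ω, A ω, C ω)) :=
    ent_relabel q (e := fun v : δ' × α' × γ' => (v.2.2, (v.1, v.2.1)))
      (fun a b h => by simp only [Prod.ext_iff] at h ⊢; tauto) (fun ω => (D ω, A ω, C ω))
  have r10 : ent q (fun ω => (B ω, D ω, A ω)) = ent q (fun ω => (D ω, A ω, B ω)) :=
    ent_relabel q (e := fun v : δ' × α' × β' => (v.2.2, (v.1, v.2.1)))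
      (fun a b h => by simp only [Prod.ext_iff] at h ⊢; tauto) (fun ω => (D ω, A ω, B ω))
  have r11 : ent q (fun ω => (C ω, (A ω, B ω))) = ent q (fun ω => (B ω, (A ω, C ω))) :=
    ent_relabel q (e := fun v : β' × α' × γ' => (v.2.2, (v.2.1, v.1)))
      (fun a b h => by simp only [Prod.ext_iff] at h ⊢; tauto) (fun ω => (B ω, (A ω, C ω)))
  have r12 : ent q (fun ω => (C ω, D ω, (A ω, B ω))) = ent q (fun ω => (B ω, D ω, (A ω, C ω))) :=
    ent_relabel q (e := fun v : β' × δ' × α' × γ' => (v.2.2.2, (v.2.1, (v.2.2.1, v.1))))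
      (fun a b h => by simp only [Prod.ext_iff] at h ⊢; tauto) (fun ω => (B ω, D ω, (A ω, C ω)))
  simp only [mi, cmi] at hz1 hz2 n1 n2 ⊢
  linarith [r1, r2, r3, r4, r5, r6, r7, r8, r9, r10, r11, r12]

end MatusAux

namespace MatusAux

section QP2
variable {Ω β γ S : Type*} [Fintype Ω] [Fintype β] [Fintype γ] [Fintype S]
  [DecidableEq β] [DecidableEq γ] [DecidableEq S]
  (p : Ω → ℝ) (B : Ω → β) (C : Ω → γ)

lemma ent_qp_fst (hp : IsPMF p) (f : Ω → S) :
    ent (qp p B C) (fun x => f x.1) = ent p f :=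
  ent_ext fun s => qp_fst p B C hp f s

lemma ent_qp_snd (hp : IsPMF p) :
    ent (qp p B C) (fun x => x.2) = ent p B :=
  ent_ext fun b => qp_b p B C hp b

lemma prOf_qp_cb (hp : IsPMF p) (c : γ) (b : β) :
    prOf (qp p B C) (fun x => (C x.1, x.2)) (c, b) = prOf p (fun ω => (C ω, B ω)) (c, b) := by
  have step1 : prOf (qp p B C) (fun x => (C x.1, x.2)) (c, b)
      = prOf (qp p B C) (fun x => (((fun _ : Ω => ()) x.1, C x.1), x.2)) (((), c), b) :=
    prOf_congr _ fun x => by simp only [Prod.mk.injEq]; tauto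
  rw [step1, qp_fcb p B C (fun _ => ()) b () c]
  rw [show prOf p (fun ω => ((fun _ : Ω => ()) ω, C ω)) ((), c) = prOf p C c from
    prOf_congr p fun ω => by simp]
  rcases eq_or_ne (prOf p C c) 0 with h0 | h0
  · have hBC : prOf p (fun ω => (B ω, C ω)) (b, c) = 0 :=
      le_antisymm (h0 ▸ prOf_mono hp.1 fun ω hh => by
        simp only [Prod.mk.injEq] at hh; tauto) (prOf_nonneg hp.1 _ _)
    have hCB : prOf p (fun ω => (C ω, B ω)) (c, b) = 0 :=
      le_antisymm (h0 ▸ prOf_mono hp.1 fun ω hh => by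
        simp only [Prod.mk.injEq] at hh; tauto) (prOf_nonneg hp.1 _ _)
    rw [h0, hCB, hBC]
    simp
  · rw [show prOf p (fun ω => (C ω, B ω)) (c, b) = prOf p (fun ω => (B ω, C ω)) (b, c) from
      prOf_congr p fun ω => by simp only [Prod.mk.injEq]; tauto]
    field_simp

lemma ent_qp_cb (hp : IsPMF p) :
    ent (qp p B C) (fun x => (C x.1, x.2)) = ent p (fun ω => (C ω, B ω)) :=
  ent_ext fun s => by obtain ⟨c, b⟩ := s; exact prOf_qp_cb p B C hp c b

/-- With the factorization hypothesis, the `(f, B)` joint is preserved by `qp`. -/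
lemma prOf_qp_fb_fact (hp : IsPMF p) (f : Ω → S)
    (hfact : ∀ s b c, prOf p (fun ω => (f ω, (B ω, C ω))) (s, (b, c)) * prOf p C c
      = prOf p (fun ω => (f ω, C ω)) (s, c) * prOf p (fun ω => (B ω, C ω)) (b, c))
    (s : S) (b : β) :
    prOf (qp p B C) (fun x => (f x.1, x.2)) (s, b) = prOf p (fun ω => (f ω, B ω)) (s, b) := by
  rw [qp_fb p B C f s b]
  have term : ∀ c, prOf p (fun ω => (f ω, C ω)) (s, c) *
      (prOf p (fun ω => (B ω, C ω)) (b, c) / prOf p C c)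
      = prOf p (fun ω => (f ω, (B ω, C ω))) (s, (b, c)) := by
    intro c
    rcases eq_or_ne (prOf p C c) 0 with h0 | h0
    · have hBC : prOf p (fun ω => (B ω, C ω)) (b, c) = 0 :=
        le_antisymm (h0 ▸ prOf_mono hp.1 fun ω hh => by
          simp only [Prod.mk.injEq] at hh; tauto) (prOf_nonneg hp.1 _ _)
      have hfbc : prOf p (fun ω => (f ω, (B ω, C ω))) (s, (b, c)) = 0 :=
        le_antisymm (h0 ▸ prOf_mono hp.1 fun ω hh => by
          simp only [Prod.mk.injEq] at hh; tauto) (prOf_nonneg hp.1 _ _)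
      rw [hBC, hfbc]
      simp
    · have h := hfact s b c
      field_simp
      linarith [h]
  rw [Finset.sum_congr rfl fun c _ => term c]
  rw [Finset.sum_congr rfl fun c _ =>
    (prOf_congr p (fun ω => by simp only [Prod.mk.injEq]; tauto) :
      prOf p (fun ω => (f ω, (B ω, C ω))) (s, (b, c))
        = prOf p (fun ω => ((f ω, B ω), C ω)) ((s, b), c))]
  exact marg_snd p (fun ω => (f ω, B ω)) C (s, b)

lemma ent_qp_fb_fact (hp : IsPMF p) (f : Ω → S)
    (hfact : ∀ s b c, prOf p (fun ω => (f ω, (B ω, C ω))) (s, (b, c)) * prOf p C c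
      = prOf p (fun ω => (f ω, C ω)) (s, c) * prOf p (fun ω => (B ω, C ω)) (b, c)) :
    ent (qp p B C) (fun x => (f x.1, x.2)) = ent p (fun ω => (f ω, B ω)) :=
  ent_ext fun s => by obtain ⟨s', b⟩ := s; exact prOf_qp_fb_fact p B C hp f hfact s' b

end QP2
end MatusAux


set_option maxHeartbeats 1000000 in
theorem matus_conditional_inequality {Ω α β γ δ : Type*} [Fintype Ω] [Fintype α] [Fintype β] [Fintype γ] [Fintype δ]
    [DecidableEq α] [DecidableEq β] [DecidableEq γ] [DecidableEq δ]
    (p : Ω → ℝ) (hp : IsPMF p)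
    (A : Ω → α) (B : Ω → β) (C : Ω → γ) (D : Ω → δ)
    (h1 : cmi p A B C = 0) (h2 : cmi p B D C = 0) :
    mi p C D ≤ cmi p C D A + cmi p C D B + mi p A B := by
  classical
  have hq : IsPMF (MatusAux.qp p B C) := MatusAux.qp_pmf p B C hp
  have F1 := fun a b c => MatusAux.cmi_eq_zero_fact hp h1 a b c
  have F2 := fun b d c => MatusAux.cmi_eq_zero_fact hp h2 b d c
  -- The two conditional independences that hold exactly in the coupled measure `qp`.
  have hz1 : cmi (MatusAux.qp p B C) (fun x : Ω × β => x.2) (fun x : Ω × β => D x.1)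
      (fun x : Ω × β => C x.1) = 0 := by
    apply MatusAux.cmi_eq_zero_of_fact hq
    intro b d c
    show prOf (MatusAux.qp p B C) (fun x => (x.2, (D x.1, C x.1))) (b, (d, c)) *
        prOf (MatusAux.qp p B C) (fun x => C x.1) c
      = prOf (MatusAux.qp p B C) (fun x => (x.2, C x.1)) (b, c) *
        prOf (MatusAux.qp p B C) (fun x => (D x.1, C x.1)) (d, c)
    rw [MatusAux.qp_bfc p B C D b d c]
    rw [show prOf (MatusAux.qp p B C) (fun x : Ω × β => C x.1) c = prOf p C c from
      MatusAux.qp_fst p B C hp C c]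
    rw [show prOf (MatusAux.qp p B C) (fun x : Ω × β => (D x.1, C x.1)) (d, c)
        = prOf p (fun ω => (D ω, C ω)) (d, c) from
      MatusAux.qp_fst p B C hp (fun ω => (D ω, C ω)) (d, c)]
    rw [show prOf (MatusAux.qp p B C) (fun x : Ω × β => (x.2, C x.1)) (b, c)
        = prOf (MatusAux.qp p B C)
            (fun x : Ω × β => (x.2, ((fun _ : Ω => ()) x.1, C x.1))) (b, ((), c)) from
      MatusAux.prOf_congr _ fun x => by simp only [Prod.mk.injEq]; tauto]
    rw [MatusAux.qp_bfc p B C (fun _ => ()) b () c]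
    rw [show prOf p (fun ω => ((fun _ : Ω => ()) ω, C ω)) ((), c) = prOf p C c from
      MatusAux.prOf_congr p fun ω => by simp]
    ring
  have hz2 : cmi (MatusAux.qp p B C) (fun x : Ω × β => x.2) (fun x : Ω × β => D x.1)
      (fun x : Ω × β => (A x.1, C x.1)) = 0 := by
    apply MatusAux.cmi_eq_zero_of_fact hq
    intro b d z
    obtain ⟨a, c⟩ := z
    show prOf (MatusAux.qp p B C) (fun x => (x.2, (D x.1, (A x.1, C x.1)))) (b, (d, (a, c))) *
        prOf (MatusAux.qp p B C) (fun x => (A x.1, C x.1)) (a, c)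
      = prOf (MatusAux.qp p B C) (fun x => (x.2, (A x.1, C x.1))) (b, (a, c)) *
        prOf (MatusAux.qp p B C) (fun x => (D x.1, (A x.1, C x.1))) (d, (a, c))
    rw [show prOf (MatusAux.qp p B C)
          (fun x : Ω × β => (x.2, (D x.1, (A x.1, C x.1)))) (b, (d, (a, c)))
        = prOf (MatusAux.qp p B C)
            (fun x : Ω × β => (x.2, ((D x.1, A x.1), C x.1))) (b, ((d, a), c)) from
      MatusAux.prOf_congr _ fun x => by simp only [Prod.mk.injEq]; tauto]
    rw [show prOf (MatusAux.qp p B C)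
          (fun x : Ω × β => (x.2, ((D x.1, A x.1), C x.1))) (b, ((d, a), c))
        = prOf p (fun ω => ((D ω, A ω), C ω)) ((d, a), c) *
          (prOf p (fun ω => (B ω, C ω)) (b, c) / prOf p C c) from
      MatusAux.qp_bfc p B C (fun ω => (D ω, A ω)) b (d, a) c]
    rw [MatusAux.qp_bfc p B C A b a c]
    rw [show prOf (MatusAux.qp p B C) (fun x : Ω × β => (A x.1, C x.1)) (a, c)
        = prOf p (fun ω => (A ω, C ω)) (a, c) from
      MatusAux.qp_fst p B C hp (fun ω => (A ω, C ω)) (a, c)]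
    rw [show prOf (MatusAux.qp p B C) (fun x : Ω × β => (D x.1, (A x.1, C x.1))) (d, (a, c))
        = prOf p (fun ω => (D ω, (A ω, C ω))) (d, (a, c)) from
      MatusAux.qp_fst p B C hp (fun ω => (D ω, (A ω, C ω))) (d, (a, c))]
    rw [show prOf p (fun ω => (D ω, (A ω, C ω))) (d, (a, c))
        = prOf p (fun ω => ((D ω, A ω), C ω)) ((d, a), c) from
      MatusAux.prOf_congr p fun ω => by simp only [Prod.mk.injEq]; tauto]
    ring
  -- factorization facts reshaped for the transfer lemmas
  have hfactA : ∀ (s : α) (b : β) (c : γ),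
      prOf p (fun ω => (A ω, (B ω, C ω))) (s, (b, c)) * prOf p C c
        = prOf p (fun ω => (A ω, C ω)) (s, c) * prOf p (fun ω => (B ω, C ω)) (b, c) :=
    fun s b c => F1 s b c
  have hfactD : ∀ (d : δ) (b : β) (c : γ),
      prOf p (fun ω => (D ω, (B ω, C ω))) (d, (b, c)) * prOf p C c
        = prOf p (fun ω => (D ω, C ω)) (d, c) * prOf p (fun ω => (B ω, C ω)) (b, c) := by
    intro d b c
    rw [show prOf p (fun ω => (D ω, (B ω, C ω))) (d, (b, c))
        = prOf p (fun ω => (B ω, D ω, C ω)) (b, (d, c)) from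
      MatusAux.prOf_congr p fun ω => by simp only [Prod.mk.injEq]; tauto]
    rw [F2 b d c]
    ring
  have hfactCD : ∀ (s : γ × δ) (b : β) (c : γ),
      prOf p (fun ω => ((C ω, D ω), (B ω, C ω))) (s, (b, c)) * prOf p C c
        = prOf p (fun ω => ((C ω, D ω), C ω)) (s, c) * prOf p (fun ω => (B ω, C ω)) (b, c) := by
    intro s b c
    obtain ⟨c0, d⟩ := s
    rcases eq_or_ne c0 c with rfl | hne
    · rw [show prOf p (fun ω => ((C ω, D ω), (B ω, C ω))) ((c0, d), (b, c0))
          = prOf p (fun ω => (B ω, D ω, C ω)) (b, (d, c0)) from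
        MatusAux.prOf_congr p fun ω => by simp only [Prod.mk.injEq]; tauto]
      rw [show prOf p (fun ω => ((C ω, D ω), C ω)) ((c0, d), c0)
          = prOf p (fun ω => (D ω, C ω)) (d, c0) from
        MatusAux.prOf_congr p fun ω => by simp only [Prod.mk.injEq]; tauto]
      rw [F2 b d c0]
      ring
    · have z1 : prOf p (fun ω => ((C ω, D ω), (B ω, C ω))) ((c0, d), (b, c)) = 0 := by
        apply MatusAux.prOf_eq_zero
        intro ω h
        simp only [Prod.mk.injEq] at h
        exact hne (h.1.1.symm.trans h.2.2)
      have z2 : prOf p (fun ω => ((C ω, D ω), C ω)) ((c0, d), c) = 0 := by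
        apply MatusAux.prOf_eq_zero
        intro ω h
        simp only [Prod.mk.injEq] at h
        exact hne (h.1.1.symm.trans h.2)
      rw [z1, z2]
      ring
  -- entropy transfers
  have tCB : ent (MatusAux.qp p B C) (fun x : Ω × β => (C x.1, x.2))
      = ent p (fun ω => (C ω, B ω)) := MatusAux.ent_qp_cb p B C hp
  have tDB : ent (MatusAux.qp p B C) (fun x : Ω × β => (D x.1, x.2))
      = ent p (fun ω => (D ω, B ω)) := MatusAux.ent_qp_fb_fact p B C hp D hfactD
  have tAB : ent (MatusAux.qp p B C) (fun x : Ω × β => (A x.1, x.2))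
      = ent p (fun ω => (A ω, B ω)) := MatusAux.ent_qp_fb_fact p B C hp A hfactA
  have tCDB : ent (MatusAux.qp p B C) (fun x : Ω × β => (C x.1, (D x.1, x.2)))
      = ent p (fun ω => (C ω, (D ω, B ω))) := by
    have s1 : ent (MatusAux.qp p B C) (fun x : Ω × β => (C x.1, (D x.1, x.2)))
        = ent (MatusAux.qp p B C) (fun x : Ω × β => ((C x.1, D x.1), x.2)) :=
      MatusAux.ent_relabel _ (e := fun v : (γ × δ) × β => (v.1.1, (v.1.2, v.2)))
        (fun a b h => by simp only [Prod.ext_iff] at h ⊢; tauto)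
        (fun x : Ω × β => ((C x.1, D x.1), x.2))
    have s2 : ent (MatusAux.qp p B C) (fun x : Ω × β => ((C x.1, D x.1), x.2))
        = ent p (fun ω => ((C ω, D ω), B ω)) :=
      MatusAux.ent_qp_fb_fact p B C hp (fun ω => (C ω, D ω)) hfactCD
    have s3 : ent p (fun ω => (C ω, (D ω, B ω))) = ent p (fun ω => ((C ω, D ω), B ω)) :=
      MatusAux.ent_relabel p (e := fun v : (γ × δ) × β => (v.1.1, (v.1.2, v.2)))
        (fun a b h => by simp only [Prod.ext_iff] at h ⊢; tauto)
        (fun ω => ((C ω, D ω), B ω))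
    rw [s1, s2, s3]
  have main := MatusAux.chain hq (fun x : Ω × β => A x.1) (fun x : Ω × β => x.2)
    (fun x : Ω × β => C x.1) (fun x : Ω × β => D x.1) hz1 hz2
  have hmi1 : mi (MatusAux.qp p B C) (fun x : Ω × β => C x.1) (fun x : Ω × β => D x.1)
      = mi p C D := by
    simp only [mi]
    rw [show ent (MatusAux.qp p B C) (fun x : Ω × β => C x.1) = ent p C from
        MatusAux.ent_qp_fst p B C hp C,
      show ent (MatusAux.qp p B C) (fun x : Ω × β => D x.1) = ent p D from
        MatusAux.ent_qp_fst p B C hp D,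
      show ent (MatusAux.qp p B C) (fun x : Ω × β => (C x.1, D x.1))
          = ent p (fun ω => (C ω, D ω)) from
        MatusAux.ent_qp_fst p B C hp (fun ω => (C ω, D ω))]
  have hcmiA : cmi (MatusAux.qp p B C) (fun x : Ω × β => C x.1) (fun x : Ω × β => D x.1)
      (fun x : Ω × β => A x.1) = cmi p C D A := by
    simp only [cmi]
    rw [show ent (MatusAux.qp p B C) (fun x : Ω × β => (C x.1, A x.1))
          = ent p (fun ω => (C ω, A ω)) from
        MatusAux.ent_qp_fst p B C hp (fun ω => (C ω, A ω)),
      show ent (MatusAux.qp p B C) (fun x : Ω × β => (D x.1, A x.1))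
          = ent p (fun ω => (D ω, A ω)) from
        MatusAux.ent_qp_fst p B C hp (fun ω => (D ω, A ω)),
      show ent (MatusAux.qp p B C) (fun x : Ω × β => (C x.1, (D x.1, A x.1)))
          = ent p (fun ω => (C ω, (D ω, A ω))) from
        MatusAux.ent_qp_fst p B C hp (fun ω => (C ω, (D ω, A ω))),
      show ent (MatusAux.qp p B C) (fun x : Ω × β => A x.1) = ent p A from
        MatusAux.ent_qp_fst p B C hp A]
  have hcmiB : cmi (MatusAux.qp p B C) (fun x : Ω × β => C x.1) (fun x : Ω × β => D x.1)
      (fun x : Ω × β => x.2) = cmi p C D B := by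
    simp only [cmi]
    rw [tCB, tDB, tCDB, MatusAux.ent_qp_snd p B C hp]
  have hmiAB : mi (MatusAux.qp p B C) (fun x : Ω × β => A x.1) (fun x : Ω × β => x.2)
      = mi p A B := by
    simp only [mi]
    rw [show ent (MatusAux.qp p B C) (fun x : Ω × β => A x.1) = ent p A from
        MatusAux.ent_qp_fst p B C hp A,
      MatusAux.ent_qp_snd p B C hp, tAB]
  rw [hmi1, hcmiA, hcmiB, hmiAB] at main
  exact main

end
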